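/- Let P ∈ R be irreducible and let λ₀, λ₁, λ₂, λ₃ be complex numbers such that D(P) = (λ₀Y₀ + λ₁Y₁ + λ₂Y₂ + λ₃)·P. Then λ₃ is a rational number. -/

import Mathlib

open MvPolynomial

/-- In `R = ℂ[T,Q,Y₀,Y₁,Y₂]` (variables `X 0 = T`, `X 1 = Q`, `X 2 = Y₀`, `X 3 = Y₁`,
`X 4 = Y₂`), the polynomial `L = (1/4)(a(Y₀−Y₁)² + b(Y₀−Y₂)² + c(Y₁−Y₂)²)`. -/
noncomputable def Lpoly5 (a b c : ℂ) : MvPolynomial (Fin 5) ℂ :=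
  C (1 / 4 : ℂ) * (C a * (X 2 - X 3) ^ 2 + C b * (X 2 - X 4) ^ 2 + C c * (X 3 - X 4) ^ 2)

/-- weights of the five variables: `T` has weight `-1`, `Q` weight `0`, `Yᵢ` weight `1`. -/
def vwt5 : Fin 5 → ℤ := fun i => if i = 0 then -1 else if i = 1 then 0 else 1

/-- weight of a monomial. -/
def wt5 (d : Fin 5 →₀ ℕ) : ℤ := (d 2 : ℤ) + d 3 + d 4 - d 0

lemma vwt5_le (i : Fin 5) : vwt5 i ≤ 1 := by
  fin_cases i <;> simp [vwt5]

lemma wt5_add_single (d : Fin 5 →₀ ℕ) (i : Fin 5) :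
    wt5 (d + Finsupp.single i 1) = wt5 d + vwt5 i := by
  fin_cases i <;>
    simp [wt5, vwt5, Finsupp.add_apply, Finsupp.single_apply] <;> ring

lemma wt5_sub_single (d : Fin 5 →₀ ℕ) (j : Fin 5) (h : d j ≠ 0) :
    wt5 (d - Finsupp.single j 1) = wt5 d - vwt5 j := by
  fin_cases j <;>
    simp only [wt5, vwt5, Finsupp.tsub_apply, Finsupp.single_apply] <;>
    simp_all <;> omega

lemma coeff_pderiv5 (i : Fin 5) (d : Fin 5 →₀ ℕ) (p : MvPolynomial (Fin 5) ℂ) :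
    coeff d (pderiv i p) = ((d i : ℂ) + 1) * coeff (d + Finsupp.single i 1) p := by
  induction p using MvPolynomial.induction_on' with
  | add p q hp hq => simp [hp, hq, mul_add]
  | monomial s a =>
    rw [pderiv_monomial, coeff_monomial, coeff_monomial]
    by_cases h : s = d + Finsupp.single i 1
    · subst h
      have h1 : d + Finsupp.single i 1 - Finsupp.single i 1 = d := by
        ext m; simp [Finsupp.tsub_apply, Finsupp.add_apply]
      have h2 : (d + Finsupp.single i 1 : Fin 5 →₀ ℕ) i = d i + 1 := by
        simp
      rw [if_pos h1, if_pos rfl, h2]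
      push_cast; ring
    · rw [if_neg h, mul_zero]
      by_cases h2 : s - Finsupp.single i 1 = d
      · have hsi : s i = 0 := by
          by_contra hne
          apply h
          have hle : Finsupp.single i 1 ≤ s := by
            rw [Finsupp.single_le_iff]; omega
          rw [← h2, tsub_add_cancel_of_le hle]
        rw [if_pos h2]
        simp [hsi]
      · rw [if_neg h2]

lemma deriv_apply5 (D : Derivation ℂ (MvPolynomial (Fin 5) ℂ) (MvPolynomial (Fin 5) ℂ))
    (p : MvPolynomial (Fin 5) ℂ) :
    D p = ∑ i : Fin 5, D (X i) * pderiv i p := by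
  induction p using MvPolynomial.induction_on with
  | C a => simp
  | add p q hp hq => simp [hp, hq, mul_add, Finset.sum_add_distrib]
  | mul_X p n hp =>
    rw [D.leibniz]
    have h1 : ∑ i : Fin 5, D (X i) * pderiv i (p * X n)
        = (∑ i : Fin 5, D (X i) * pderiv i p) * X n + D (X n) * p := by
      simp only [pderiv_mul, mul_add, Finset.sum_add_distrib, Finset.sum_mul]
      congr 1
      · exact Finset.sum_congr rfl fun i _ => by ring
      · rw [Finset.sum_eq_single n]
        · simp
        · intro b _ hb
          rw [pderiv_X_of_ne (Ne.symm hb)]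
          simp
        · simp
    rw [h1, ← hp]
    simp only [smul_eq_mul]
    ring

lemma quad_vanish5 (p : MvPolynomial (Fin 5) ℂ) (d : Fin 5 →₀ ℕ)
    (hmin : ∀ e, wt5 e < wt5 d → coeff e p = 0)
    (i j k : Fin 5) (hj : vwt5 j = 1) (hk : vwt5 k = 1) :
    coeff d (X j * (X k * pderiv i p)) = 0 := by
  classical
  rw [coeff_X_mul']
  split_ifs with h1
  swap; · rfl
  rw [coeff_X_mul']
  split_ifs with h2
  swap; · rfl
  rw [coeff_pderiv5]
  refine mul_eq_zero_of_right _ (hmin _ ?_)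
  have hd1 : d j ≠ 0 := Finsupp.mem_support_iff.mp h1
  have hd2 : (d - Finsupp.single j 1 : Fin 5 →₀ ℕ) k ≠ 0 := Finsupp.mem_support_iff.mp h2
  rw [wt5_add_single, wt5_sub_single _ _ hd2, wt5_sub_single _ _ hd1, hj, hk]
  have := vwt5_le i
  omega

/-- if `P ∈ R` is irreducible and `D P = (λ₀Y₀ + λ₁Y₁ + λ₂Y₂ + λ₃)·P`, then
`λ₃` is a rational number. -/
theorem stmt_9 (α β γ : ℚ)
    (hα : ∃ n : ℕ, 0 < n ∧ α = 1 / n) (hβ : ∃ n : ℕ, 0 < n ∧ β = 1 / n)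
    (hγ : ∃ n : ℕ, 0 < n ∧ γ = 1 / n)
    (h0 : 0 < α) (h1 : α < β) (h2 : β < γ) (h3 : γ < 1) (h4 : α + β < γ)
    (a b c w : ℂ)
    (ha : a = (γ : ℂ) * (1 - (α : ℂ) - (β : ℂ)) + 2 * (α : ℂ) * (β : ℂ))
    (hb : b = ((α : ℂ) + (β : ℂ)) * ((γ : ℂ) - (α : ℂ) - (β : ℂ)) +
        2 * (α : ℂ) * (β : ℂ) - (γ : ℂ) + 1)
    (hc : c = (γ : ℂ) * ((α : ℂ) + (β : ℂ) - (γ : ℂ) + 1) - 2 * (α : ℂ) * (β : ℂ))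
    (hw : w = 1 - (γ : ℂ))
    (D : Derivation ℂ (MvPolynomial (Fin 5) ℂ) (MvPolynomial (Fin 5) ℂ))
    (hDT : D (X 0) = C w)
    (hDQ : D (X 1) = C w * X 1)
    (hDY0 : D (X 2) = (X 2) ^ 2 - Lpoly5 a b c)
    (hDY1 : D (X 3) = (X 3) ^ 2 - Lpoly5 a b c)
    (hDY2 : D (X 4) = (X 4) ^ 2 - Lpoly5 a b c)
    (P : MvPolynomial (Fin 5) ℂ) (hP : Irreducible P) (l₀ l₁ l₂ l₃ : ℂ)
    (hDP : D P = (C l₀ * X 2 + C l₁ * X 3 + C l₂ * X 4 + C l₃) * P) :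
    ∃ r : ℚ, l₃ = (r : ℂ) := by
  classical
  have key := deriv_apply5 D P
  rw [Fin.sum_univ_five, hDT, hDQ, hDY0, hDY1, hDY2] at key
  have main : (C l₀ * X 2 + C l₁ * X 3 + C l₂ * X 4 + C l₃) * P
      = C w * pderiv 0 P + C w * X 1 * pderiv 1 P + (X 2 ^ 2 - Lpoly5 a b c) * pderiv 2 P
        + (X 3 ^ 2 - Lpoly5 a b c) * pderiv 3 P + (X 4 ^ 2 - Lpoly5 a b c) * pderiv 4 P := by
    rw [← hDP, key]
  obtain ⟨d, hd, hdmin⟩ :=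
    P.support.exists_min_image wt5 (support_nonempty.mpr hP.ne_zero)
  have hmin : ∀ e, wt5 e < wt5 d → coeff e P = 0 := by
    intro e he
    by_contra hne
    exact absurd (hdmin e (mem_support_iff.mpr hne)) (not_le.mpr he)
  -- the λ-side
  have hXP : ∀ m : Fin 5, vwt5 m = 1 → coeff d (X m * P) = 0 := by
    intro m hm
    rw [coeff_X_mul']
    split_ifs with h
    · refine hmin _ ?_
      rw [wt5_sub_single _ _ (Finsupp.mem_support_iff.mp h), hm]
      omega
    · rfl
  have cR : coeff d ((C l₀ * X 2 + C l₁ * X 3 + C l₂ * X 4 + C l₃) * P)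
      = l₃ * coeff d P := by
    simp only [add_mul, coeff_add, mul_assoc, coeff_C_mul,
      hXP 2 rfl, hXP 3 rfl, hXP 4 rfl, mul_zero, zero_add]
  -- term 0
  have c0 : coeff d (C w * pderiv 0 P) = 0 := by
    rw [coeff_C_mul, coeff_pderiv5, hmin _ (by rw [wt5_add_single]; have h5 : vwt5 0 = -1 := rfl; omega)]
    ring
  -- term 1
  have c1 : coeff d (C w * X 1 * pderiv 1 P) = w * (d 1 : ℂ) * coeff d P := by
    rw [mul_assoc, coeff_C_mul, coeff_X_mul']
    split_ifs with h
    · have hd1 : d 1 ≠ 0 := Finsupp.mem_support_iff.mp h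
      rw [coeff_pderiv5]
      have e1 : (d - Finsupp.single 1 1 : Fin 5 →₀ ℕ) 1 = d 1 - 1 := by
        simp [Finsupp.tsub_apply]
      have e2 : d - Finsupp.single 1 1 + Finsupp.single 1 1 = d := by
        refine tsub_add_cancel_of_le ?_
        rw [Finsupp.single_le_iff]; omega
      rw [e1, e2]
      have : ((d 1 - 1 : ℕ) : ℂ) + 1 = (d 1 : ℂ) := by
        have : (1 : ℕ) ≤ d 1 := by omega
        push_cast [Nat.cast_sub this]; ring
      rw [this]; ring
    · have hd1 : d 1 = 0 := by
        by_contra hne; exact h (Finsupp.mem_support_iff.mpr hne)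
      rw [hd1]; simp
  -- quadratic terms
  have c2 : ∀ i : Fin 5, vwt5 i = 1 →
      coeff d ((X i ^ 2 - Lpoly5 a b c) * pderiv i P) = 0 := by
    intro i hi
    have expand : (X i ^ 2 - Lpoly5 a b c) * pderiv i P =
        X i * (X i * pderiv i P)
        - C (1/4 : ℂ) * (C a * (X 2 * (X 2 * pderiv i P)))
        + C (1/4 : ℂ) * (C a * (X 2 * (X 3 * pderiv i P)))
        + C (1/4 : ℂ) * (C a * (X 2 * (X 3 * pderiv i P)))
        - C (1/4 : ℂ) * (C a * (X 3 * (X 3 * pderiv i P)))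
        - C (1/4 : ℂ) * (C b * (X 2 * (X 2 * pderiv i P)))
        + C (1/4 : ℂ) * (C b * (X 2 * (X 4 * pderiv i P)))
        + C (1/4 : ℂ) * (C b * (X 2 * (X 4 * pderiv i P)))
        - C (1/4 : ℂ) * (C b * (X 4 * (X 4 * pderiv i P)))
        - C (1/4 : ℂ) * (C c * (X 3 * (X 3 * pderiv i P)))
        + C (1/4 : ℂ) * (C c * (X 3 * (X 4 * pderiv i P)))
        + C (1/4 : ℂ) * (C c * (X 3 * (X 4 * pderiv i P)))
        - C (1/4 : ℂ) * (C c * (X 4 * (X 4 * pderiv i P))) := by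
      simp only [Lpoly5]; ring
    rw [expand]
    simp only [coeff_add, coeff_sub, coeff_C_mul,
      quad_vanish5 P d hmin i i i hi hi,
      quad_vanish5 P d hmin i 2 2 rfl rfl,
      quad_vanish5 P d hmin i 2 3 rfl rfl,
      quad_vanish5 P d hmin i 3 3 rfl rfl,
      quad_vanish5 P d hmin i 2 4 rfl rfl,
      quad_vanish5 P d hmin i 4 4 rfl rfl,
      quad_vanish5 P d hmin i 3 4 rfl rfl,
      mul_zero, add_zero, sub_zero, zero_add, zero_sub, neg_zero, sub_self]
  have hc := congrArg (coeff d) main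
  rw [cR, coeff_add, coeff_add, coeff_add, coeff_add, c0, c1,
    c2 2 rfl, c2 3 rfl, c2 4 rfl] at hc
  have hcd : coeff d P ≠ 0 := mem_support_iff.mp hd
  have hl : l₃ = w * (d 1 : ℂ) := by
    have h' : l₃ * coeff d P = w * (d 1 : ℂ) * coeff d P := by
      rw [hc]; ring
    exact mul_right_cancel₀ hcd h'
  refine ⟨(1 - γ) * (d 1 : ℕ), ?_⟩
  rw [hl, hw]
  push_cast
  ring
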